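/- For α = 1, the function C(s) = s^{−1/3} − (1/3)s^{−2/3} satisfies C'' = (C')²/C − C'/s + C²/s + α/s² − 1/(s²C) at every s > 0 where C(s) ≠ 0. -/

import Mathlib

open Real

private lemma hasDerivAt_C (s : ℝ) (hs : 0 < s) :
    HasDerivAt (fun u : ℝ => u ^ (-(1 : ℝ) / 3) - (1 / 3) * u ^ (-(2 : ℝ) / 3))
      (-(1/3) * s ^ (-(4:ℝ)/3) + (2/9) * s ^ (-(5:ℝ)/3)) s := by
  have h1 := Real.hasDerivAt_rpow_const (x := s) (p := (-(1:ℝ)/3)) (Or.inl hs.ne')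
  have h2 := Real.hasDerivAt_rpow_const (x := s) (p := (-(2:ℝ)/3)) (Or.inl hs.ne')
  have := h1.sub (h2.const_mul (1/3 : ℝ))
  refine this.congr_deriv ?_
  rw [show (-(1:ℝ)/3 - 1) = -(4:ℝ)/3 by norm_num, show (-(2:ℝ)/3 - 1) = -(5:ℝ)/3 by norm_num]
  ring

private lemma hasDerivAt_C' (s : ℝ) (hs : 0 < s) :
    HasDerivAt (fun u : ℝ => -(1/3) * u ^ (-(4:ℝ)/3) + (2/9) * u ^ (-(5:ℝ)/3))
      ((4/9) * s ^ (-(7:ℝ)/3) - (10/27) * s ^ (-(8:ℝ)/3)) s := by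
  have h1 := Real.hasDerivAt_rpow_const (x := s) (p := (-(4:ℝ)/3)) (Or.inl hs.ne')
  have h2 := Real.hasDerivAt_rpow_const (x := s) (p := (-(5:ℝ)/3)) (Or.inl hs.ne')
  have := (h1.const_mul (-(1/3) : ℝ)).add (h2.const_mul (2/9 : ℝ))
  refine this.congr_deriv ?_
  rw [show (-(4:ℝ)/3 - 1) = -(7:ℝ)/3 by norm_num, show (-(5:ℝ)/3 - 1) = -(8:ℝ)/3 by norm_num]
  ring

theorem algebraic_solution_alpha_one (α : ℝ) (hα : α = 1) :
    ∀ s ∈ Set.Ioi (0 : ℝ),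
      s ^ (-(1 : ℝ) / 3) - (1 / 3) * s ^ (-(2 : ℝ) / 3) ≠ 0 →
      deriv (deriv (fun u : ℝ => u ^ (-(1 : ℝ) / 3) - (1 / 3) * u ^ (-(2 : ℝ) / 3))) s =
        (deriv (fun u : ℝ => u ^ (-(1 : ℝ) / 3) - (1 / 3) * u ^ (-(2 : ℝ) / 3)) s) ^ 2
            / (s ^ (-(1 : ℝ) / 3) - (1 / 3) * s ^ (-(2 : ℝ) / 3))
          - deriv (fun u : ℝ => u ^ (-(1 : ℝ) / 3) - (1 / 3) * u ^ (-(2 : ℝ) / 3)) s / s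
          + (s ^ (-(1 : ℝ) / 3) - (1 / 3) * s ^ (-(2 : ℝ) / 3)) ^ 2 / s + α / s ^ 2
          - 1 / (s ^ 2 * (s ^ (-(1 : ℝ) / 3) - (1 / 3) * s ^ (-(2 : ℝ) / 3))) := by
  intro s hs hC0
  rw [Set.mem_Ioi] at hs
  subst hα
  -- first derivative
  have hd1 : deriv (fun u : ℝ => u ^ (-(1 : ℝ) / 3) - (1 / 3) * u ^ (-(2 : ℝ) / 3)) s
      = -(1/3) * s ^ (-(4:ℝ)/3) + (2/9) * s ^ (-(5:ℝ)/3) := (hasDerivAt_C s hs).deriv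
  -- second derivative
  have hev : deriv (fun u : ℝ => u ^ (-(1 : ℝ) / 3) - (1 / 3) * u ^ (-(2 : ℝ) / 3))
      =ᶠ[nhds s] (fun u : ℝ => -(1/3) * u ^ (-(4:ℝ)/3) + (2/9) * u ^ (-(5:ℝ)/3)) := by
    filter_upwards [Ioi_mem_nhds hs] with u hu
    exact (hasDerivAt_C u hu).deriv
  have hd2 : deriv (deriv (fun u : ℝ => u ^ (-(1 : ℝ) / 3) - (1 / 3) * u ^ (-(2 : ℝ) / 3))) s
      = (4/9) * s ^ (-(7:ℝ)/3) - (10/27) * s ^ (-(8:ℝ)/3) := by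
    rw [hev.deriv_eq]
    exact (hasDerivAt_C' s hs).deriv
  rw [hd1, hd2]
  -- algebra: set x = s^(1/3)
  set x : ℝ := s ^ ((1:ℝ)/3) with hxdef
  have hx : 0 < x := Real.rpow_pos_of_pos hs _
  have key : ∀ k : ℕ, s ^ (-(k:ℝ)/3) = (x ^ k)⁻¹ := by
    intro k
    rw [hxdef, ← Real.rpow_natCast (s ^ ((1:ℝ)/3)) k, ← Real.rpow_mul hs.le,
      show (-(k:ℝ)/3) = -(1/3*(k:ℝ)) by ring, Real.rpow_neg hs.le]
  have e1 : s ^ (-(1:ℝ)/3) = x⁻¹ := by simpa using key 1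
  have e2 : s ^ (-(2:ℝ)/3) = (x^2)⁻¹ := by simpa using key 2
  have e4 : s ^ (-(4:ℝ)/3) = (x^4)⁻¹ := by simpa using key 4
  have e5 : s ^ (-(5:ℝ)/3) = (x^5)⁻¹ := by simpa using key 5
  have e7 : s ^ (-(7:ℝ)/3) = (x^7)⁻¹ := by simpa using key 7
  have e8 : s ^ (-(8:ℝ)/3) = (x^8)⁻¹ := by simpa using key 8
  have hs3 : s = x ^ 3 := by
    rw [hxdef, ← Real.rpow_natCast (s ^ ((1:ℝ)/3)) 3, ← Real.rpow_mul hs.le]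
    norm_num
  rw [e1, e2] at hC0
  have hC0' : x⁻¹ - 1/3 * (x^2)⁻¹ ≠ 0 := hC0
  have hC0'' : 3 * x - 1 ≠ 0 := by
    intro h
    apply hC0'
    rw [show x = 1/3 by linarith]
    norm_num
  have hC : x⁻¹ - 1/3 * (x^2)⁻¹ = (3*x-1)/(3*x^2) := by
    field_simp
  rw [e1, e2, e4, e5, e7, e8, hs3, hC]
  have hC3 : x * 3 - 1 ≠ 0 := by rwa [mul_comm]
  field_simp
  ring
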